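/- arXiv:1803.06849 — 6 statements merged into one kernel-verified Lean document; each statement's English description precedes it below -/
import Mathlib

section
/- If f is L-additive with part h_f, g_f is completely additive with f = g_f·h_f, and also f = g̃·h̃ with g̃ completely additive and h̃ completely multiplicative, and if f(p) ≠ 0 and h_f(p) ≠ 0 for all primes p, then h̃(p) = h_f(p) and g̃(p) = g_f(p) for all primes p. -/
def CompletelyMultiplicative (h : ℕ → ℚ) : Prop :=
  h 1 = 1 ∧ ∀ m n : ℕ, 0 < m → 0 < n → h (m * n) = h m * h n

def CompletelyAdditive (g : ℕ → ℚ) : Prop :=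
  ∀ m n : ℕ, 0 < m → 0 < n → g (m * n) = g m + g n

def LeibnizAdditive (f h : ℕ → ℚ) : Prop :=
  CompletelyMultiplicative h ∧
  ∀ m n : ℕ, 0 < m → 0 < n → f (m * n) = f m * h n + f n * h m

theorem stmt_5 (f gf hf gt ht : ℕ → ℚ)
    (hLa : LeibnizAdditive f hf)
    (hgf : CompletelyAdditive gf) (hfac : ∀ n : ℕ, 0 < n → f n = gf n * hf n)
    (hgt : CompletelyAdditive gt) (hht : CompletelyMultiplicative ht)
    (hfac' : ∀ n : ℕ, 0 < n → f n = gt n * ht n)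
    (hne : ∀ p : ℕ, p.Prime → f p ≠ 0 ∧ hf p ≠ 0) :
    ∀ p : ℕ, p.Prime → ht p = hf p ∧ gt p = gf p := by
  intro p hp
  have hp0 : 0 < p := hp.pos
  have hp2 : 0 < p * p := Nat.mul_pos hp0 hp0
  obtain ⟨hf0, hhf0⟩ := hne p hp
  -- f(p²) computed two ways
  have h1 : f (p * p) = 2 * (f p * hf p) := by
    rw [hLa.2 p p hp0 hp0]; ring
  have h2 : f (p * p) = 2 * (f p * ht p) := by
    rw [hfac' (p * p) hp2, hgt p p hp0 hp0, hht.2 p p hp0 hp0,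
      ]
    rw [hfac' p hp0]; ring
  have hht_eq : ht p = hf p := by
    have : 2 * (f p * hf p) = 2 * (f p * ht p) := h1 ▸ h2
    have := mul_left_cancel₀ (two_ne_zero) this
    exact (mul_left_cancel₀ hf0 this).symm
  refine ⟨hht_eq, ?_⟩
  have : gt p * ht p = gf p * hf p := (hfac' p hp0).symm.trans (hfac p hp0)
  rw [hht_eq] at this
  exact mul_right_cancel₀ hhf0 this
end

section
/- Let f be L-additive with completely multiplicative part h_f such that h_f is nonzero at all primes dividing n, and let n = p_1^{n_1} ⋯ p_s^{n_s} with p_i distinct primes. Then f(n) = h_f(n) · Σ_{i=1}^s n_i f(p_i)/h_f(p_i). -/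
private def S (f h : ℕ → ℚ) (n : ℕ) : ℚ :=
  n.factorization.sum fun p k => (k : ℚ) * f p / h p

private lemma S_mul (f h : ℕ → ℚ) {m n : ℕ} (hm : m ≠ 0) (hn : n ≠ 0) :
    S f h (m * n) = S f h m + S f h n := by
  unfold S
  rw [Nat.factorization_mul hm hn]
  apply Finsupp.sum_add_index
  · intro p _; simp
  · intro p _ k₁ k₂; push_cast; ring

private lemma S_prime (f h : ℕ → ℚ) {p : ℕ} (hp : p.Prime) :
    S f h p = f p / h p := by
  unfold S
  rw [hp.factorization]
  simp

private lemma key (f h : ℕ → ℚ) (hf : LeibnizAdditive f h) :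
    ∀ n, 0 < n → (∀ p ∈ n.primeFactors, h p ≠ 0) → f n = h n * S f h n := by
  intro n
  induction n using Nat.strong_induction_on with
  | _ n ih =>
    intro hn hne
    rcases eq_or_ne n 1 with rfl | h1
    · have hf1 := hf.2 1 1 one_pos one_pos
      rw [hf.1.1] at hf1
      have : f 1 = 0 := by linarith [hf1]
      simp [this, S]
    · have hp : n.minFac.Prime := Nat.minFac_prime h1
      obtain ⟨m, hnm⟩ := Nat.minFac_dvd n
      set p := n.minFac with hpdef
      have hm : 0 < m := Nat.pos_of_ne_zero (by rintro rfl; simp at hnm; omega)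
      have hmn : m < n := by
        rw [hnm]; exact (lt_mul_iff_one_lt_left hm).mpr hp.one_lt
      have hne_m : ∀ q ∈ m.primeFactors, h q ≠ 0 := fun q hq =>
        hne q (Nat.primeFactors_mono ⟨p, by rw [hnm]; ring⟩ hn.ne' hq)
      have hp0 : h p ≠ 0 := hne p (Nat.mem_primeFactors.mpr ⟨hp, Nat.minFac_dvd n, hn.ne'⟩)
      have fIH := ih m hmn hm hne_m
      have hhn : h n = h p * h m := by rw [hnm]; exact hf.1.2 p m hp.pos hm
      have hSn : S f h n = f p / h p + S f h m := by
        rw [hnm, S_mul f h hp.pos.ne' hm.ne', S_prime f h hp]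
      rw [hSn, hhn, hnm, hf.2 p m hp.pos hm, fIH]
      field_simp

theorem stmt_7 (f h : ℕ → ℚ) (hf : LeibnizAdditive f h)
    (n : ℕ) (hn : 0 < n) (hne : ∀ p ∈ n.primeFactors, h p ≠ 0) :
    f n = h n * ∑ p ∈ n.primeFactors, (n.factorization p : ℚ) * f p / h p := by
  rw [key f h hf n hn hne, S, Finsupp.sum, Nat.support_factorization]
end

section
/- An arithmetic function f is completely additive if and only if f·(u∗v) = (f·u)∗v + u∗(f·v) for all arithmetic functions u, v, where ∗ denotes Dirichlet convolution and · denotes pointwise product. -/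
/-- Dirichlet convolution of two `ℚ`-valued arithmetic functions. -/
def dconv (u v : ℕ → ℚ) : ℕ → ℚ :=
  fun n => ∑ x ∈ n.divisorsAntidiagonal, u x.1 * v x.2

theorem stmt_15 (f : ℕ → ℚ) :
    CompletelyAdditive f ↔
    ∀ u v : ℕ → ℚ, ∀ n : ℕ,
      f n * dconv u v n =
        dconv (fun k => f k * u k) v n + dconv u (fun k => f k * v k) n := by
  constructor
  · intro hf u v n
    simp only [dconv, Finset.mul_sum, ← Finset.sum_add_distrib]
    refine Finset.sum_congr rfl fun x hx => ?_
    obtain ⟨hxn, hn0⟩ := Nat.mem_divisorsAntidiagonal.mp hx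
    have h1 : 0 < x.1 := Nat.pos_of_ne_zero (fun h0 => by rw [h0] at hxn; simp at hxn; exact hn0 hxn.symm)
    have h2 : 0 < x.2 := Nat.pos_of_ne_zero (fun h0 => by rw [h0] at hxn; simp at hxn; exact hn0 hxn.symm)
    have : f n = f x.1 + f x.2 := by rw [← hxn]; exact hf _ _ h1 h2
    rw [this]; ring
  · intro H m n hm hn
    have := H (fun k => if k = m then 1 else 0) (fun k => if k = n then 1 else 0) (m * n)
    have key : ∀ (a b : ℚ), (∑ x ∈ (m * n).divisorsAntidiagonal,
        (if x.1 = m then a else 0) * (if x.2 = n then b else 0)) = a * b := by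
      intro a b
      rw [Finset.sum_eq_single (m, n)]
      · simp
      · rintro ⟨x, y⟩ hx hne
        by_cases h1 : x = m
        · by_cases h2 : y = n
          · exact absurd (by rw [h1, h2]) hne
          · simp [h2]
        · simp [h1]
      · intro h
        simp [Nat.mem_divisorsAntidiagonal, hm.ne', hn.ne'] at h
    simp only [dconv] at this
    have e1 : (∑ x ∈ (m * n).divisorsAntidiagonal,
        (if x.1 = m then (1:ℚ) else 0) * (if x.2 = n then 1 else 0)) = 1 := by
      simpa using key 1 1
    have e2 : (∑ x ∈ (m * n).divisorsAntidiagonal,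
        (f x.1 * if x.1 = m then (1:ℚ) else 0) * (if x.2 = n then 1 else 0)) = f m := by
      have := key (f m) 1
      rw [mul_one] at this
      rw [← this]
      refine Finset.sum_congr rfl fun x hx => ?_
      by_cases h1 : x.1 = m <;> simp [h1]
    have e3 : (∑ x ∈ (m * n).divisorsAntidiagonal,
        (if x.1 = m then (1:ℚ) else 0) * (f x.2 * if x.2 = n then 1 else 0)) = f n := by
      have := key 1 (f n)
      rw [one_mul] at this
      rw [← this]
      refine Finset.sum_congr rfl fun x hx => ?_
      by_cases h2 : x.2 = n <;> simp [h2]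
    rw [e1, e2, e3] at this
    linarith
end

section
/- If f is L-additive with completely multiplicative part h_f which is nonzero-valued, then f·(u∗v) = (f·u)∗(h_f·v) + (h_f·u)∗(f·v) for all arithmetic functions u, v. -/
theorem stmt_17 (f h : ℕ → ℚ) (hLa : LeibnizAdditive f h)
    (hne : ∀ n : ℕ, 0 < n → h n ≠ 0) :
    ∀ u v : ℕ → ℚ, ∀ n : ℕ,
      f n * dconv u v n =
        dconv (fun k => f k * u k) (fun k => h k * v k) n +
        dconv (fun k => h k * u k) (fun k => f k * v k) n := by
  intro u v n
  unfold dconv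
  rw [Finset.mul_sum, ← Finset.sum_add_distrib]
  refine Finset.sum_congr rfl fun x hx => ?_
  obtain ⟨hab, hn0⟩ := Nat.mem_divisorsAntidiagonal.mp hx
  have ha : 0 < x.1 := Nat.pos_of_ne_zero (by intro h0; rw [h0] at hab; simp at hab; exact hn0 hab.symm)
  have hb : 0 < x.2 := Nat.pos_of_ne_zero (by intro h0; rw [h0] at hab; simp at hab; exact hn0 hab.symm)
  have := hLa.2 x.1 x.2 ha hb
  rw [hab] at this
  rw [this]; ring
end

section
/- For all arithmetic functions u, v with values in ℚ: D·(u∗v) = (D·u)∗(N·v) + (N·u)∗(D·v), where D is the arithmetic derivative (extended to ℚ-valued), N(n) = n, ∗ is Dirichlet convolution, and · is pointwise product. -/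
theorem stmt_18 (D : ℕ → ℕ) (h1 : D 1 = 0)
    (hp : ∀ p : ℕ, p.Prime → D p = 1)
    (hL : ∀ m n : ℕ, 0 < m → 0 < n → D (m * n) = m * D n + D m * n) :
    ∀ u v : ℕ → ℚ, ∀ n : ℕ,
      (D n : ℚ) * dconv u v n =
        dconv (fun k => (D k : ℚ) * u k) (fun k => (k : ℚ) * v k) n +
        dconv (fun k => (k : ℚ) * u k) (fun k => (D k : ℚ) * v k) n := by
  intro u v n
  unfold dconv
  rw [Finset.mul_sum, ← Finset.sum_add_distrib]
  apply Finset.sum_congr rfl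
  intro x hx
  obtain ⟨hxn, hn0⟩ := Nat.mem_divisorsAntidiagonal.mp hx
  have h1 : 0 < x.1 := Nat.pos_of_ne_zero (fun h => hn0 (by rw [← hxn, h, zero_mul]))
  have h2 : 0 < x.2 := Nat.pos_of_ne_zero (fun h => hn0 (by rw [← hxn, h, mul_zero]))
  have := hL x.1 x.2 h1 h2
  rw [← hxn, this]
  push_cast
  ring
end

section
/- If f is L-additive with nonzero-valued completely multiplicative part h_f, then f·τ = 2(f∗h_f), where τ is the number-of-divisors function; in particular D·τ = 2(D∗N) for the arithmetic derivative D and N(n)=n. -/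
lemma key_s19 (f h : ℕ → ℚ) (hLa : LeibnizAdditive f h) :
    ∀ n : ℕ, f n * (n.divisors.card : ℚ) = 2 * dconv f h n := by
  intro n
  rcases Nat.eq_zero_or_pos n with rfl | hn
  · simp [dconv]
  obtain ⟨hcm, hL⟩ := hLa
  have hcard : n.divisorsAntidiagonal.card = n.divisors.card := by
    rw [← Nat.image_fst_divisorsAntidiagonal]
    refine (Finset.card_image_of_injOn ?_).symm
    intro x hx y hy hxy
    simp only [Finset.mem_coe, Nat.mem_divisorsAntidiagonal] at hx hy
    have hx1 : 0 < x.1 := by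
      rcases Nat.eq_zero_or_pos x.1 with h0 | h0
      · exfalso; rw [h0, zero_mul] at hx; exact hx.2 hx.1.symm
      · exact h0
    have : x.2 = y.2 := by
      have := hx.1.trans hy.1.symm
      rw [hxy] at this
      exact Nat.eq_of_mul_eq_mul_left (hxy ▸ hx1) this
    exact Prod.ext hxy this
  rw [← hcard]
  have h1 : f n * (n.divisorsAntidiagonal.card : ℚ)
      = ∑ x ∈ n.divisorsAntidiagonal, (f x.1 * h x.2 + f x.2 * h x.1) := by
    rw [Finset.sum_congr rfl (fun x hx => ?_)]
    · rw [Finset.sum_const, nsmul_eq_mul, mul_comm]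
    · rw [Nat.mem_divisorsAntidiagonal] at hx
      have hx1 : 0 < x.1 := by
        rcases Nat.eq_zero_or_pos x.1 with h0 | h0
        · exfalso; rw [h0, zero_mul] at hx; exact hx.2 hx.1.symm
        · exact h0
      have hx2 : 0 < x.2 := by
        rcases Nat.eq_zero_or_pos x.2 with h0 | h0
        · exfalso; rw [h0, mul_zero] at hx; exact hx.2 hx.1.symm
        · exact h0
      rw [← hx.1]
      exact (hL x.1 x.2 hx1 hx2).symm
  rw [h1, Finset.sum_add_distrib]
  have h2 : ∑ x ∈ n.divisorsAntidiagonal, f x.2 * h x.1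
      = ∑ x ∈ n.divisorsAntidiagonal, f x.1 * h x.2 := by
    apply Finset.sum_nbij' (fun x => x.swap) (fun x => x.swap)
    all_goals intro x hx
    all_goals simp_all [Nat.mem_divisorsAntidiagonal, mul_comm]
  rw [h2, dconv]; ring

theorem stmt_19 (f h : ℕ → ℚ) (hLa : LeibnizAdditive f h)
    (hne : ∀ n : ℕ, 0 < n → h n ≠ 0)
    (D : ℕ → ℕ) (h1 : D 1 = 0)
    (hp : ∀ p : ℕ, p.Prime → D p = 1)
    (hDL : ∀ m n : ℕ, 0 < m → 0 < n → D (m * n) = m * D n + D m * n) :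
    (∀ n : ℕ, f n * (n.divisors.card : ℚ) = 2 * dconv f h n) ∧
    (∀ n : ℕ, (D n : ℚ) * (n.divisors.card : ℚ) =
      2 * dconv (fun k => (D k : ℚ)) (fun k => (k : ℚ)) n) := by
  have hD : LeibnizAdditive (fun k => (D k : ℚ)) (fun k => (k : ℚ)) := by
    refine ⟨⟨by norm_num, fun m n _ _ => by push_cast; ring⟩, fun m n hm hn => ?_⟩
    have := hDL m n hm hn
    push_cast [this]
    ring
  exact ⟨key_s19 f h hLa, key_s19 _ _ hD⟩
end
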